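/- The family of matrices E_a * A_b * E_c, indexed by the triples (a,b,c) ∈ P, is an F-basis of the Terwilliger F-algebra T (a basis of T as an F-submodule of Matrix X X F), and the cardinality of P equals 2^(2·n₁) · 5^(n₂); in particular the F-dimension of T is 2^(2·n₁) · 5^(n₂). -/

import Mathlib

open Matrix Finset
open scoped Classical

set_option synthInstance.maxHeartbeats 1000000
set_option maxHeartbeats 2000000
set_option linter.unusedSectionVars false

noncomputable section

variable {n : ℕ}

/-- The disagreement set of two tuples. -/
def dis {U : Fin n → Type} [∀ i, DecidableEq (U i)] (x y : ∀ i, U i) : Finset (Fin n) :=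
  Finset.univ.filter fun i => x i ≠ y i

/-- `S° = {i ∈ S | 2 < |U i|}`. -/
def circ (U : Fin n → Type) [∀ i, Fintype (U i)] (S : Finset (Fin n)) : Finset (Fin n) :=
  S.filter fun i => 2 < Fintype.card (U i)

/-- The valency `k_S`. -/
def val (U : Fin n → Type) [∀ i, Fintype (U i)] (S : Finset (Fin n)) : ℕ :=
  ∏ i ∈ S, (Fintype.card (U i) - 1)

variable (U : Fin n → Type) [∀ i, Fintype (U i)] [∀ i, DecidableEq (U i)]
variable (F : Type) [Field F]

/-- The adjacency matrix `A_S`. -/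
def Amat (S : Finset (Fin n)) : Matrix (∀ i, U i) (∀ i, U i) F :=
  Matrix.of fun x y => if dis x y = S then 1 else 0

/-- The dual idempotent `E_S^*(x₀)`. -/
def Emat (x₀ : ∀ i, U i) (S : Finset (Fin n)) : Matrix (∀ i, U i) (∀ i, U i) F :=
  Matrix.diagonal fun y => if dis x₀ y = S then 1 else 0

/-- The Terwilliger `F`-algebra of the factorial scheme with respect to the base point `x₀`:
the subalgebra of `Matrix X X F` generated by the adjacency matrices and dual idempotents. -/
def Tw (x₀ : ∀ i, U i) : Subalgebra F (Matrix (∀ i, U i) (∀ i, U i) F) :=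
  Algebra.adjoin F ({M | ∃ S, M = Amat U F S} ∪ {M | ∃ S, M = Emat U F x₀ S})

/-- `B_{g,h,i} = ∑_{g △ i ⊆ j ⊆ h} E_g A_j E_i`. -/
def Bmat (x₀ : ∀ i, U i) (g h i : Finset (Fin n)) : Matrix (∀ i, U i) (∀ i, U i) F :=
  ∑ j ∈ Finset.univ.filter (fun j => symmDiff g i ⊆ j ∧ j ⊆ h),
    Emat U F x₀ g * Amat U F j * Emat U F x₀ i

/-- The index set `P` of triples `(a,b,c)` with `a △ c ⊆ b ⊆ (a △ c) ∪ (a ∩ c)°`. -/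
def Pset : Finset (Finset (Fin n) × Finset (Fin n) × Finset (Fin n)) :=
  Finset.univ.filter fun t =>
    symmDiff t.1 t.2.2 ⊆ t.2.1 ∧ t.2.1 ⊆ symmDiff t.1 t.2.2 ∪ circ U (t.1 ∩ t.2.2)

/-- `n₁ = |{i | card (U i) = 2}|`. -/
def nOne : ℕ := (Finset.univ.filter fun i : Fin n => Fintype.card (U i) = 2).card

/-- `n₂ = |{i | 2 < card (U i)}|`. -/
def nTwo : ℕ := (Finset.univ.filter fun i : Fin n => 2 < Fintype.card (U i)).card

/-! ### Auxiliary lemmas -/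

section Aux

variable {U} {F}

lemma mem_dis {x y : ∀ i, U i} {i : Fin n} : i ∈ dis x y ↔ x i ≠ y i := by
  simp [dis]

lemma dis_eq_empty {x y : ∀ i, U i} : dis x y = ∅ ↔ x = y := by
  simp [dis, Finset.filter_eq_empty_iff, funext_iff, not_not]

/-- Applying a family of permutations coordinatewise preserves disagreement sets. -/
lemma dis_comp (e : ∀ i, Equiv.Perm (U i)) (u v : ∀ i, U i) :
    dis (fun i => e i (u i)) (fun i => e i (v i)) = dis u v := by
  ext i
  simp [mem_dis, (e i).injective.ne_iff]

/-- The entries of `E_a A_b E_c`. -/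
lemma triple_apply (x₀ : ∀ i, U i) (a b c : Finset (Fin n)) (x y : ∀ i, U i) :
    (Emat U F x₀ a * Amat U F b * Emat U F x₀ c) x y =
      if dis x₀ x = a ∧ dis x y = b ∧ dis x₀ y = c then 1 else 0 := by
  rw [Emat, Emat, Matrix.mul_diagonal, Matrix.diagonal_mul]
  simp only [Amat, Matrix.of_apply]
  by_cases h1 : dis x₀ x = a <;> by_cases h2 : dis x y = b <;>
    by_cases h3 : dis x₀ y = c <;> simp [h1, h2, h3]

/-- Any partial matching of three points (with the first one fixed) respecting the equality
pattern extends to a permutation. -/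
lemma extend3 {α : Type} (w p q p' q' : α)
    (h1 : w = p ↔ w = p') (h2 : w = q ↔ w = q') (h3 : p = q ↔ p' = q') :
    ∃ e : Equiv.Perm α, e w = w ∧ e p = p' ∧ e q = q' := by
  classical
  set e₂ := Equiv.swap p p' with he₂
  have hw2 : e₂ w = w := by
    by_cases h : w = p
    · have h' : w = p' := h1.mp h
      rw [he₂, ← h, ← h', Equiv.swap_self, Equiv.refl_apply]
    · exact Equiv.swap_apply_of_ne_of_ne h (fun hh => h (h1.mpr hh))
  have hp2 : e₂ p = p' := Equiv.swap_apply_left _ _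
  set e₃ := Equiv.swap (e₂ q) q' with he₃
  refine ⟨e₂.trans e₃, ?_, ?_, ?_⟩
  · show e₃ (e₂ w) = w
    rw [hw2]
    by_cases h : w = q
    · have hq' : w = q' := h2.mp h
      have hq2 : e₂ q = w := by rw [← h, hw2]
      rw [he₃, hq2, ← hq', Equiv.swap_self, Equiv.refl_apply]
    · have hA : e₂ q ≠ w := by
        intro hh
        exact h (e₂.injective (by rw [hh, hw2] : e₂ q = e₂ w)).symm
      exact Equiv.swap_apply_of_ne_of_ne (Ne.symm hA) (fun hh => h (h2.mpr hh))
  · show e₃ (e₂ p) = p'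
    rw [hp2]
    by_cases h : p = q
    · have h' : p' = q' := h3.mp h
      have hq2 : e₂ q = p' := by rw [← h, hp2]
      rw [he₃, hq2, h', Equiv.swap_self, Equiv.refl_apply]
    · have hA : e₂ q ≠ p' := by
        intro hh
        exact h (e₂.injective (hh.trans hp2.symm)).symm
      exact Equiv.swap_apply_of_ne_of_ne (Ne.symm hA) (fun hh => h (h3.mpr hh))
  · show e₃ (e₂ q) = q'
    exact Equiv.swap_apply_left _ _

/-- Two pairs with the same "class data" are related by a coordinatewise permutation fixing
the base point. -/
lemma exists_perm (x₀ x y x' y' : ∀ i, U i) (ha : dis x₀ x = dis x₀ x')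
    (hb : dis x y = dis x' y') (hc : dis x₀ y = dis x₀ y') :
    ∃ e : ∀ i, Equiv.Perm (U i),
      (∀ i, e i (x₀ i) = x₀ i) ∧ (∀ i, e i (x i) = x' i) ∧ (∀ i, e i (y i) = y' i) := by
  have key : ∀ i, ∃ ei : Equiv.Perm (U i),
      ei (x₀ i) = x₀ i ∧ ei (x i) = x' i ∧ ei (y i) = y' i := by
    intro i
    apply extend3
    · have := Finset.ext_iff.mp ha i
      simp only [mem_dis] at this
      exact not_iff_not.mp (by simpa using this)
    · have := Finset.ext_iff.mp hc i
      simp only [mem_dis] at this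
      exact not_iff_not.mp (by simpa using this)
    · have := Finset.ext_iff.mp hb i
      simp only [mem_dis] at this
      exact not_iff_not.mp (by simpa using this)
  choose e h0 h1 h2 using key
  exact ⟨e, h0, h1, h2⟩

end Aux

/-- The invariance predicate: the entry `M x y` only depends on the triple
`(dis x₀ x, dis x y, dis x₀ y)`. -/
def ClassInv (x₀ : ∀ i, U i) (M : Matrix (∀ i, U i) (∀ i, U i) F) : Prop :=
  ∀ x y x' y', dis x₀ x = dis x₀ x' → dis x y = dis x' y' → dis x₀ y = dis x₀ y' →
    M x y = M x' y'

section Aux2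

variable {U} {F}

lemma inv_amat (x₀ : ∀ i, U i) (S : Finset (Fin n)) : ClassInv U F x₀ (Amat U F S) := by
  intro x y x' y' _ hb _
  simp [Amat, hb]

lemma inv_emat (x₀ : ∀ i, U i) (S : Finset (Fin n)) : ClassInv U F x₀ (Emat U F x₀ S) := by
  intro x y x' y' ha hb hc
  have hxy : x = y ↔ x' = y' := by
    rw [← dis_eq_empty, ← dis_eq_empty, hb]
  simp only [Emat, Matrix.diagonal_apply]
  by_cases h : x = y
  · rw [if_pos h, if_pos (hxy.mp h), ha]
  · rw [if_neg h, if_neg (fun hh => h (hxy.mpr hh))]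

lemma inv_algebraMap (x₀ : ∀ i, U i) (r : F) :
    ClassInv U F x₀ (algebraMap F (Matrix (∀ i, U i) (∀ i, U i) F) r) := by
  intro x y x' y' _ hb _
  have hxy : x = y ↔ x' = y' := by
    rw [← dis_eq_empty, ← dis_eq_empty, hb]
  simp only [Matrix.algebraMap_matrix_apply]
  by_cases h : x = y
  · rw [if_pos h, if_pos (hxy.mp h)]
  · rw [if_neg h, if_neg (fun hh => h (hxy.mpr hh))]

lemma inv_add (x₀ : ∀ i, U i) {M N : Matrix (∀ i, U i) (∀ i, U i) F}
    (hM : ClassInv U F x₀ M) (hN : ClassInv U F x₀ N) : ClassInv U F x₀ (M + N) := by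
  intro x y x' y' ha hb hc
  simp [Matrix.add_apply, hM x y x' y' ha hb hc, hN x y x' y' ha hb hc]

lemma inv_mul (x₀ : ∀ i, U i) {M N : Matrix (∀ i, U i) (∀ i, U i) F}
    (hM : ClassInv U F x₀ M) (hN : ClassInv U F x₀ N) : ClassInv U F x₀ (M * N) := by
  intro x y x' y' ha hb hc
  obtain ⟨e, h0, h1, h2⟩ := exists_perm x₀ x y x' y' ha hb hc
  have hx' : (fun i => e i (x i)) = x' := funext h1
  have hy' : (fun i => e i (y i)) = y' := funext h2
  have hx0 : (fun i => e i (x₀ i)) = x₀ := funext h0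
  rw [Matrix.mul_apply, Matrix.mul_apply]
  rw [← Equiv.sum_comp (Equiv.piCongrRight e) (fun z => M x' z * N z y')]
  apply Finset.sum_congr rfl
  intro z _
  have hz : (Equiv.piCongrRight e) z = fun i => e i (z i) := rfl
  rw [hz]
  have hd1 : dis x₀ z = dis x₀ (fun i => e i (z i)) := by
    conv_rhs => rw [← hx0]
    rw [dis_comp]
  have hd2 : dis x z = dis x' (fun i => e i (z i)) := by
    conv_rhs => rw [← hx']
    rw [dis_comp]
  have hd3 : dis z y = dis (fun i => e i (z i)) y' := by
    conv_rhs => rw [← hy']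
    rw [dis_comp]
  exact congrArg₂ (· * ·) (hM x z x' _ ha hd2 hd1) (hN z y _ y' hd1 hd3 hc)

/-- Every element of the Terwilliger algebra is class-invariant. -/
lemma tw_le_inv (x₀ : ∀ i, U i) {M : Matrix (∀ i, U i) (∀ i, U i) F}
    (hM : M ∈ Tw U F x₀) : ClassInv U F x₀ M := by
  induction hM using Algebra.adjoin_induction with
  | mem M hm =>
    rcases hm with ⟨S, rfl⟩ | ⟨S, rfl⟩
    · exact inv_amat x₀ S
    · exact inv_emat x₀ S
  | algebraMap r => exact inv_algebraMap x₀ r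
  | add M N _ _ hM hN => exact inv_add x₀ hM hN
  | mul M N _ _ hM hN => exact inv_mul x₀ hM hN

end Aux2

/-- The spanning family of matrices indexed by `P`. -/
def Gfam (x₀ : ∀ i, U i)
    (t : {t : Finset (Fin n) × Finset (Fin n) × Finset (Fin n) // t ∈ Pset U}) :
    Matrix (∀ i, U i) (∀ i, U i) F :=
  Emat U F x₀ t.1.1 * Amat U F t.1.2.1 * Emat U F x₀ t.1.2.2

section Aux3

variable {U} {F}

/-- Any pair `(x, y)` realizes a triple in `P`. -/
lemma realizable_mem_Pset (x₀ x y : ∀ i, U i) :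
    (dis x₀ x, dis x y, dis x₀ y) ∈ Pset U := by
  simp only [Pset, Finset.mem_filter, Finset.mem_univ, true_and]
  constructor
  · intro i hi
    rw [Finset.mem_symmDiff] at hi
    rw [mem_dis]
    rcases hi with ⟨h1, h2⟩ | ⟨h1, h2⟩ <;> rw [mem_dis] at h1 <;>
      rw [mem_dis, not_not] at h2
    · exact fun h => h1 (h2.trans h.symm)
    · exact fun h => h1 (h2.trans h)
  · intro i hi
    rw [mem_dis] at hi
    rw [Finset.mem_union]
    by_cases hx : x₀ i = x i
    · refine Or.inl (Finset.mem_symmDiff.mpr (Or.inr ⟨?_, ?_⟩))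
      · rw [mem_dis]
        exact fun h => hi (hx.symm.trans h)
      · rw [mem_dis, not_not]
        exact hx
    · by_cases hy : x₀ i = y i
      · refine Or.inl (Finset.mem_symmDiff.mpr (Or.inl ⟨?_, ?_⟩))
        · rw [mem_dis]; exact hx
        · rw [mem_dis, not_not]; exact hy
      · refine Or.inr ?_
        have hcard : 2 < Fintype.card (U i) := by
          have h3 : ({x₀ i, x i, y i} : Finset (U i)).card = 3 := by
            rw [Finset.card_insert_of_notMem (by simp [hx, hy]),
              Finset.card_insert_of_notMem (by simp [hi]), Finset.card_singleton]
          have := Finset.card_le_univ ({x₀ i, x i, y i} : Finset (U i))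
          rw [h3] at this
          omega
        exact Finset.mem_filter.mpr
          ⟨Finset.mem_inter.mpr ⟨mem_dis.mpr hx, mem_dis.mpr hy⟩, hcard⟩

/-- Every triple in `P` is realized by some pair `(x, y)`. -/
lemma exists_witness (hU : ∀ i, 2 ≤ Fintype.card (U i)) (x₀ : ∀ i, U i)
    (t : Finset (Fin n) × Finset (Fin n) × Finset (Fin n)) (ht : t ∈ Pset U) :
    ∃ x y : ∀ i, U i, dis x₀ x = t.1 ∧ dis x y = t.2.1 ∧ dis x₀ y = t.2.2 := by
  obtain ⟨a, b, c⟩ := t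
  simp only [Pset, Finset.mem_filter, Finset.mem_univ, true_and] at ht
  obtain ⟨h1, h2⟩ := ht
  have key : ∀ i, ∃ uv : U i × U i,
      ((x₀ i ≠ uv.1) ↔ i ∈ a) ∧ ((uv.1 ≠ uv.2) ↔ i ∈ b) ∧ ((x₀ i ≠ uv.2) ↔ i ∈ c) := by
    intro i
    have hnt : Nontrivial (U i) :=
      Fintype.one_lt_card_iff_nontrivial.mp (lt_of_lt_of_le one_lt_two (hU i))
    obtain ⟨u₀, hu₀⟩ := exists_ne (x₀ i)
    by_cases ha : i ∈ a <;> by_cases hc : i ∈ c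
    · by_cases hb : i ∈ b
      · have hcirc : i ∈ circ U (a ∩ c) := by
          rcases Finset.mem_union.mp (h2 hb) with h | h
          · exfalso; rw [Finset.mem_symmDiff] at h; tauto
          · exact h
        have hcard : 2 < Fintype.card (U i) := (Finset.mem_filter.mp hcirc).2
        have h2' : 1 < (Finset.univ.erase (x₀ i)).card := by
          rw [Finset.card_erase_of_mem (Finset.mem_univ _), Finset.card_univ]; omega
        obtain ⟨u, hu, v, hv, huv⟩ := Finset.one_lt_card.mp h2'
        have hu' : u ≠ x₀ i := (Finset.mem_erase.mp hu).1
        have hv' : v ≠ x₀ i := (Finset.mem_erase.mp hv).1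
        exact ⟨(u, v), iff_of_true (Ne.symm hu') ha, iff_of_true huv hb,
          iff_of_true (Ne.symm hv') hc⟩
      · exact ⟨(u₀, u₀), iff_of_true (Ne.symm hu₀) ha,
          iff_of_false (not_not_intro rfl) hb, iff_of_true (Ne.symm hu₀) hc⟩
    · have hb : i ∈ b := h1 (Finset.mem_symmDiff.mpr (Or.inl ⟨ha, hc⟩))
      exact ⟨(u₀, x₀ i), iff_of_true (Ne.symm hu₀) ha, iff_of_true hu₀ hb,
        iff_of_false (not_not_intro rfl) hc⟩
    · have hb : i ∈ b := h1 (Finset.mem_symmDiff.mpr (Or.inr ⟨hc, ha⟩))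
      exact ⟨(x₀ i, u₀), iff_of_false (not_not_intro rfl) ha,
        iff_of_true (Ne.symm hu₀) hb, iff_of_true (Ne.symm hu₀) hc⟩
    · have hb : i ∉ b := by
        intro hb
        rcases Finset.mem_union.mp (h2 hb) with h | h
        · rw [Finset.mem_symmDiff] at h; tauto
        · have := Finset.mem_inter.mp (Finset.mem_filter.mp h).1
          tauto
      exact ⟨(x₀ i, x₀ i), iff_of_false (not_not_intro rfl) ha,
        iff_of_false (not_not_intro rfl) hb, iff_of_false (not_not_intro rfl) hc⟩
  choose f hf1 hf2 hf3 using key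
  refine ⟨fun i => (f i).1, fun i => (f i).2, ?_, ?_, ?_⟩ <;> ext i <;> rw [mem_dis]
  · exact hf1 i
  · exact hf2 i
  · exact hf3 i

/-- Every class-invariant matrix lies in the span of the `Gfam` family. -/
lemma inv_mem_span (hU : ∀ i, 2 ≤ Fintype.card (U i)) (x₀ : ∀ i, U i)
    {M : Matrix (∀ i, U i) (∀ i, U i) F} (hM : ClassInv U F x₀ M) :
    M ∈ Submodule.span F (Set.range (Gfam U F x₀)) := by
  choose xw yw hxw hbw hcw using
    fun t : {t // t ∈ Pset U} => exists_witness hU x₀ t.1 t.2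
  have hexp : M = ∑ t : {t // t ∈ Pset U}, M (xw t) (yw t) • Gfam U F x₀ t := by
    ext x y
    rw [Matrix.sum_apply]
    have hmem : (dis x₀ x, dis x y, dis x₀ y) ∈ Pset U := realizable_mem_Pset x₀ x y
    rw [Finset.sum_eq_single (⟨(dis x₀ x, dis x y, dis x₀ y), hmem⟩ : {t // t ∈ Pset U})]
    · rw [Matrix.smul_apply, Gfam, triple_apply]
      rw [if_pos ⟨rfl, rfl, rfl⟩, smul_eq_mul, mul_one]
      exact (hM _ _ x y (hxw _) (hbw _) (hcw _)).symm
    · intro t' _ hne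
      rw [Matrix.smul_apply, Gfam, triple_apply, if_neg, smul_zero]
      rintro ⟨e1, e2, e3⟩
      refine hne (Subtype.ext ?_)
      show t'.1 = (dis x₀ x, dis x y, dis x₀ y)
      rw [e1, e2, e3]
    · intro h
      exact absurd (Finset.mem_univ _) h
  rw [hexp]
  exact Submodule.sum_mem _
    (fun t _ => Submodule.smul_mem _ _ (Submodule.subset_span ⟨t, rfl⟩))

/-- The `Gfam` family is linearly independent. -/
lemma gfam_li (hU : ∀ i, 2 ≤ Fintype.card (U i)) (x₀ : ∀ i, U i) :
    LinearIndependent F (Gfam U F x₀) := by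
  rw [Fintype.linearIndependent_iff]
  intro g hg t
  obtain ⟨⟨ta, tb, tc⟩, htt⟩ := t
  obtain ⟨x, y, hx, hb, hc⟩ := exists_witness hU x₀ _ htt
  have h0 : (∑ i : {t // t ∈ Pset U}, g i • Gfam U F x₀ i) x y = 0 := by rw [hg]; rfl
  rw [Matrix.sum_apply] at h0
  rw [Finset.sum_eq_single (⟨(ta, tb, tc), htt⟩ : {t // t ∈ Pset U})] at h0
  · rw [Matrix.smul_apply, Gfam, triple_apply, if_pos ⟨hx, hb, hc⟩, smul_eq_mul,
      mul_one] at h0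
    exact h0
  · intro t' _ hne
    rw [Matrix.smul_apply, Gfam, triple_apply, if_neg, smul_zero]
    rintro ⟨e1, e2, e3⟩
    refine hne (Subtype.ext ?_)
    have h4 : (t' : Finset (Fin n) × Finset (Fin n) × Finset (Fin n))
        = (dis x₀ x, dis x y, dis x₀ y) := by rw [e1, e2, e3]
    rw [h4, hx, hb, hc]
  · intro h
    exact absurd (Finset.mem_univ _) h

/-- Counting the triples in `P`. -/
lemma card_Pset (hU : ∀ i, 2 ≤ Fintype.card (U i)) :
    (Pset U).card = 2 ^ (2 * nOne U) * 5 ^ (nTwo U) := by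
  have h1 : (Pset U).card = ∑ p : Finset (Fin n) × Finset (Fin n),
      ((Pset U).filter (fun t => (t.1, t.2.2) = p)).card :=
    Finset.card_eq_sum_card_fiberwise (fun t _ => Finset.mem_univ _)
  have h2 : ∀ p : Finset (Fin n) × Finset (Fin n),
      ((Pset U).filter (fun t => (t.1, t.2.2) = p)).card
        = 2 ^ (circ U (p.1 ∩ p.2)).card := by
    intro p
    have hdisj : Disjoint (symmDiff p.1 p.2) (circ U (p.1 ∩ p.2)) :=
      (disjoint_symmDiff_inf p.1 p.2).mono_right (Finset.filter_subset _ _)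
    have hsub : symmDiff p.1 p.2 ⊆ symmDiff p.1 p.2 ∪ circ U (p.1 ∩ p.2) :=
      Finset.subset_union_left
    have hbij : ((Pset U).filter (fun t => (t.1, t.2.2) = p)).card
        = (Finset.Icc (symmDiff p.1 p.2)
            (symmDiff p.1 p.2 ∪ circ U (p.1 ∩ p.2))).card := by
      refine Finset.card_bij' (fun t _ => t.2.1) (fun b _ => (p.1, b, p.2))
        ?_ ?_ ?_ ?_
      case refine_1 =>
        intro t ht
        obtain ⟨htP, htp⟩ := Finset.mem_filter.mp ht
        simp only [Pset, Finset.mem_filter, Finset.mem_univ, true_and] at htP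
        have h1' : t.1 = p.1 := (Prod.ext_iff.mp htp).1
        have h2' : t.2.2 = p.2 := (Prod.ext_iff.mp htp).2
        rw [Finset.mem_Icc]
        rw [← h1', ← h2']
        exact ⟨htP.1, htP.2⟩
      case refine_2 =>
        intro b hb
        rw [Finset.mem_Icc] at hb
        refine Finset.mem_filter.mpr ⟨?_, rfl⟩
        simp only [Pset, Finset.mem_filter, Finset.mem_univ, true_and]
        exact ⟨hb.1, hb.2⟩
      case refine_3 =>
        rintro ⟨t1, t2, t3⟩ ht
        obtain ⟨-, htp⟩ := Finset.mem_filter.mp ht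
        have h1' : t1 = p.1 := (Prod.ext_iff.mp htp).1
        have h2' : t3 = p.2 := (Prod.ext_iff.mp htp).2
        simp only
        rw [← h1', ← h2']
      case refine_4 =>
        intro b _
        rfl
    rw [hbij, Finset.card_Icc_finset hsub, Finset.card_union_of_disjoint hdisj]
    congr 1
    omega
  rw [h1, Finset.sum_congr rfl (fun p _ => h2 p), Fintype.sum_prod_type]
  have hcirc_inter : ∀ a c : Finset (Fin n), circ U (a ∩ c) = circ U a ∩ c := by
    intro a c
    ext i
    simp only [circ, Finset.mem_filter, Finset.mem_inter]
    tauto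
  have hinner : ∀ a : Finset (Fin n),
      (∑ c : Finset (Fin n), 2 ^ (circ U (a ∩ c)).card)
        = ∏ i : Fin n, (if i ∈ circ U a then 3 else 2) := by
    intro a
    have e1 : ∀ c : Finset (Fin n), (2:ℕ) ^ (circ U (a ∩ c)).card
        = ∏ i ∈ c, (if i ∈ circ U a then 2 else 1) := by
      intro c
      rw [Finset.prod_ite, Finset.prod_const, Finset.prod_const, one_pow, mul_one,
        Finset.filter_mem_eq_inter, hcirc_inter, Finset.inter_comm]
    rw [Finset.sum_congr rfl (fun c _ => e1 c)]
    have hpa := Finset.prod_add (fun i : Fin n => if i ∈ circ U a then (2:ℕ) else 1)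
      (fun _ => 1) Finset.univ
    rw [Finset.powerset_univ] at hpa
    simp only [Finset.prod_const_one, mul_one] at hpa
    rw [← hpa]
    apply Finset.prod_congr rfl
    intro i _
    by_cases h : i ∈ circ U a <;> simp [h]
  rw [Finset.sum_congr rfl (fun a _ => hinner a)]
  have houter : ∀ a : Finset (Fin n),
      (∏ i : Fin n, if i ∈ circ U a then 3 else 2)
        = (∏ i ∈ a, (if 2 < Fintype.card (U i) then (3:ℕ) else 2)) *
            ∏ _i ∈ Finset.univ \ a, 2 := by
    intro a
    rw [← Finset.prod_filter_mul_prod_filter_not Finset.univ (fun i => i ∈ a)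
      (fun i => if i ∈ circ U a then (3:ℕ) else 2)]
    congr 1
    · rw [Finset.filter_univ_mem]
      apply Finset.prod_congr rfl
      intro i hi
      have hiff : i ∈ circ U a ↔ 2 < Fintype.card (U i) := by
        simp [circ, hi]
      by_cases h : 2 < Fintype.card (U i)
      · rw [if_pos (hiff.mpr h), if_pos h]
      · rw [if_neg (fun hh => h (hiff.mp hh)), if_neg h]
    · rw [Finset.filter_not, Finset.filter_univ_mem]
      apply Finset.prod_congr rfl
      intro i hi
      rw [if_neg]
      intro hh
      exact (Finset.mem_sdiff.mp hi).2 (Finset.mem_filter.mp hh).1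
  have hsum : ∑ a : Finset (Fin n),
      ((∏ i ∈ a, (if 2 < Fintype.card (U i) then (3:ℕ) else 2)) *
        ∏ _i ∈ Finset.univ \ a, 2)
      = ∏ i : Fin n, ((if 2 < Fintype.card (U i) then (3:ℕ) else 2) + 2) := by
    rw [Finset.prod_add, Finset.powerset_univ]
  rw [Finset.sum_congr rfl (fun a _ => houter a), hsum]
  have h5 : ∀ i : Fin n, ((if 2 < Fintype.card (U i) then (3:ℕ) else 2) + 2)
      = if 2 < Fintype.card (U i) then 5 else 4 := by
    intro i
    split <;> rfl
  rw [Finset.prod_congr rfl (fun i _ => h5 i), Finset.prod_ite,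
    Finset.prod_const, Finset.prod_const]
  have hfilt : Finset.univ.filter (fun i : Fin n => ¬ 2 < Fintype.card (U i))
      = Finset.univ.filter (fun i : Fin n => Fintype.card (U i) = 2) := by
    apply Finset.filter_congr
    intro i _
    have := hU i
    constructor
    · intro h
      omega
    · intro h
      omega
  rw [hfilt]
  rw [nOne, nTwo, show (4:ℕ) = 2^2 from rfl, ← pow_mul]
  ring

end Aux3

/-- The matrices `E_a A_b E_c`, `(a,b,c) ∈ P`, form an `F`-basis of the
Terwilliger algebra `T`, and `|P| = 2^(2 n₁) ⬝ 5^(n₂)`. -/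
theorem stmt1 (hn : 1 ≤ n) (hU : ∀ i, 2 ≤ Fintype.card (U i)) (x₀ : ∀ i, U i) :
    (∃ b : Module.Basis {t : Finset (Fin n) × Finset (Fin n) × Finset (Fin n) // t ∈ Pset U} F
        (Tw U F x₀),
      ∀ t, ((b t : Tw U F x₀) : Matrix (∀ i, U i) (∀ i, U i) F) =
        Emat U F x₀ t.1.1 * Amat U F t.1.2.1 * Emat U F x₀ t.1.2.2) ∧
    (Pset U).card = 2 ^ (2 * nOne U) * 5 ^ (nTwo U) := by
  classical
  have hGmem : ∀ t : {t : Finset (Fin n) × Finset (Fin n) × Finset (Fin n) // t ∈ Pset U},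
      Gfam U F x₀ t ∈ Tw U F x₀ := fun t =>
    mul_mem (mul_mem (Algebra.subset_adjoin (Or.inr ⟨_, rfl⟩))
      (Algebra.subset_adjoin (Or.inl ⟨_, rfl⟩))) (Algebra.subset_adjoin (Or.inr ⟨_, rfl⟩))
  refine ⟨?_, card_Pset hU⟩
  set p : Submodule F (Matrix (∀ i, U i) (∀ i, U i) F) :=
    Subalgebra.toSubmodule (Tw U F x₀) with hp
  have hspan : Submodule.span F (Set.range (Gfam U F x₀)) = p := by
    apply le_antisymm
    · rw [Submodule.span_le]
      rintro _ ⟨t, rfl⟩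
      exact hGmem t
    · intro M hM
      exact inv_mem_span hU x₀ (tw_le_inv x₀ hM)
  set f : {t // t ∈ Pset U} → (Tw U F x₀) := fun t => ⟨Gfam U F x₀ t, hGmem t⟩ with hf
  have hcomp : (p.subtype ∘ f) = Gfam U F x₀ := rfl
  have hli : LinearIndependent F f :=
    LinearIndependent.of_comp p.subtype
      (show LinearIndependent F (Gfam U F x₀) from gfam_li hU x₀)
  have htop : ⊤ ≤ Submodule.span F (Set.range f) := by
    have hmap : Submodule.map p.subtype (Submodule.span F (Set.range f))
        = Submodule.map p.subtype ⊤ := by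
      rw [Submodule.map_span, ← Set.range_comp, Submodule.map_subtype_top]
      show Submodule.span F (Set.range (Gfam U F x₀)) = p
      exact hspan
    exact le_of_eq (Submodule.map_injective_of_injective p.injective_subtype hmap).symm
  refine ⟨Module.Basis.mk hli htop, ?_⟩
  intro t
  rw [Module.Basis.mk_apply]
  rfl

end
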